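/- Let φ : ℝ → ℝ be a continuous mapping, let S ⊂ ℝ be a finite set, and let N ≥ 4 be an integer. Suppose that for every x, y ∈ ℝ there exist v ∈ V and k ∈ [1,N]⁴ ∩ ℤ₀⁴ with Σ_{j=1}^{4} v_j·φ(x+k_j·y) ∈ S. Then for any nonempty intervals I, J ⊆ ℝ there exist nonempty intervals I' ⊆ I and J' ⊆ J, vectors k ∈ [1,N]⁴ ∩ ℤ₀⁴ and v ∈ V, and a number s ∈ S such that I' × J' ⊆ Q(k, v, s), i.e. Σ_{j=1}^{4} v_j·φ(x+k_j·y) = s for all (x,y) ∈ I' × J'. -/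
import Mathlib


open MeasureTheory Set

/-- The family `V` of seven vectors in `ℝ⁴`. -/
def Vfam : Set (Fin 4 → ℝ) :=
  { ![1, 1, -1, -1], ![1, 1, -2, 0], ![1, -1, 0, 0], ![1, 1, 0, 0],
    ![2, 0, 0, 0], ![1, 1, -1, 0], ![1, 0, 0, 0] }

theorem lemma_two (φ : ℝ → ℝ) (hφ : Continuous φ)
    (S : Set ℝ) (hS : S.Finite) (N : ℤ) (hN : 4 ≤ N)
    (hyp : ∀ x y : ℝ, ∃ v ∈ Vfam, ∃ k : Fin 4 → ℤ,
      Function.Injective k ∧ (∀ j, 1 ≤ k j ∧ k j ≤ N) ∧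
      (∑ j : Fin 4, v j * φ (x + (k j : ℝ) * y)) ∈ S) :
    ∀ a b c d : ℝ, a < b → c < d →
      ∃ a' b' c' d' : ℝ, a' < b' ∧ c' < d' ∧
        Set.Ioo a' b' ⊆ Set.Ioo a b ∧ Set.Ioo c' d' ⊆ Set.Ioo c d ∧
        ∃ v ∈ Vfam, ∃ k : Fin 4 → ℤ,
          Function.Injective k ∧ (∀ j, 1 ≤ k j ∧ k j ≤ N) ∧
          ∃ s ∈ S, ∀ x ∈ Set.Ioo a' b', ∀ y ∈ Set.Ioo c' d',
            (∑ j : Fin 4, v j * φ (x + (k j : ℝ) * y)) = s := by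
  intro a b c d hab hcd
  -- the countable index type
  have hVfin : Vfam.Finite := by
    unfold Vfam
    exact (Set.finite_singleton _).insert _ |>.insert _ |>.insert _ |>.insert _
      |>.insert _ |>.insert _
  haveI : Countable {v // v ∈ Vfam} := hVfin.countable.to_subtype
  haveI : Countable {s // s ∈ S} := hS.countable.to_subtype
  set ι : Type := {v // v ∈ Vfam} ×
    {k : Fin 4 → ℤ // Function.Injective k ∧ ∀ j, 1 ≤ k j ∧ k j ≤ N} × {s // s ∈ S} with hι
  -- the closed sets
  set rect : Set (ℝ × ℝ) := Set.Ioo a b ×ˢ Set.Ioo c d with hrect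
  have hrectopen : IsOpen rect := isOpen_Ioo.prod isOpen_Ioo
  set F : Option ι → Set (ℝ × ℝ) := fun o =>
    match o with
    | none => rectᶜ
    | some ⟨v, k, s⟩ =>
        {p : ℝ × ℝ | (∑ j : Fin 4, v.1 j * φ (p.1 + (k.1 j : ℝ) * p.2)) = s.1} with hF
  have hclosed : ∀ o, IsClosed (F o) := by
    rintro (_ | ⟨v, k, s⟩)
    · exact hrectopen.isClosed_compl
    · apply isClosed_eq _ continuous_const
      apply continuous_finset_sum
      intro j _
      exact continuous_const.mul (hφ.comp (continuous_fst.add (continuous_const.mul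
        continuous_snd)))
  have hU : ⋃ o, F o = Set.univ := by
    apply Set.eq_univ_of_forall
    intro p
    obtain ⟨v, hv, k, hk1, hk2, hk3⟩ := hyp p.1 p.2
    exact Set.mem_iUnion.2 ⟨some ⟨⟨v, hv⟩, ⟨k, hk1, hk2⟩, ⟨_, hk3⟩⟩, rfl⟩
  have hdense := dense_iUnion_interior_of_closed hclosed hU
  have hne : rect.Nonempty := ⟨⟨(a + b) / 2, (c + d) / 2⟩, by
    constructor <;> constructor <;> simp <;> linarith⟩
  obtain ⟨p, hp1, hp2⟩ := hdense.inter_open_nonempty rect hrectopen hne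
  rw [Set.mem_iUnion] at hp2
  obtain ⟨o, hpo⟩ := hp2
  match o with
  | none =>
      exact absurd hp1 (interior_subset hpo : p ∈ rectᶜ)
  | some ⟨⟨v, hv⟩, ⟨k, hk1, hk2⟩, ⟨s, hs⟩⟩ =>
      have hWopen : IsOpen (interior (F (some ⟨⟨v, hv⟩, ⟨k, hk1, hk2⟩, ⟨s, hs⟩⟩)) ∩ rect) :=
        isOpen_interior.inter hrectopen
      obtain ⟨ε, hε, hball⟩ := Metric.isOpen_iff.1 hWopen p ⟨hpo, hp1⟩
      have hball' : Set.Ioo (p.1 - ε) (p.1 + ε) ×ˢ Set.Ioo (p.2 - ε) (p.2 + ε) ⊆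
          interior (F (some ⟨⟨v, hv⟩, ⟨k, hk1, hk2⟩, ⟨s, hs⟩⟩)) ∩ rect := by
        intro q hq
        apply hball
        rw [Metric.mem_ball, Prod.dist_eq]
        rw [← Real.ball_eq_Ioo, ← Real.ball_eq_Ioo] at hq
        exact max_lt hq.1 hq.2
      have hp2mem : p.2 ∈ Set.Ioo (p.2 - ε) (p.2 + ε) := by constructor <;> linarith
      have hp1mem : p.1 ∈ Set.Ioo (p.1 - ε) (p.1 + ε) := by constructor <;> linarith
      refine ⟨p.1 - ε, p.1 + ε, p.2 - ε, p.2 + ε, by linarith, by linarith, ?_, ?_,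
        v, hv, k, hk1, hk2, s, hs, ?_⟩
      · intro x hx
        exact (hball' (Set.mk_mem_prod hx hp2mem)).2.1
      · intro y hy
        exact (hball' (Set.mk_mem_prod hp1mem hy)).2.2
      · intro x hx y hy
        have h2 : (x, y) ∈ F (some ⟨⟨v, hv⟩, ⟨k, hk1, hk2⟩, ⟨s, hs⟩⟩) :=
          interior_subset (hball' (Set.mk_mem_prod hx hy)).1
        exact h2
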